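/- Let X be a real normed space, fix real numbers α, η, β with 1 < α < η < β and a constant C > 0, and let N, A, B : X → ℝ satisfy C⁻¹‖u‖^η ≤ N(u) ≤ C‖u‖^η, |A(u)| ≤ C‖u‖^α and |B(u)| ≤ C‖u‖^β for all u ∈ X. Fix c ∈ ℝ. If (u_n) is a sequence in X such that A(u_n) > 0 and ((η−α)/η)N(u_n) − ((β−α)/β)B(u_n) + α·c = 0 for every n, and ‖u_n‖ → ∞, then λ(c,u_n) = (N(u_n)/η − B(u_n)/β − c)/(A(u_n)/α) → ∞. -/

import Mathlib

open Filter

/-- Under the growth conditions `C⁻¹‖u‖^η ≤ N(u) ≤ C‖u‖^η`,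
`|A(u)| ≤ C‖u‖^α`, `|B(u)| ≤ C‖u‖^β` (`1 < α < η < β`) and fixed `c`, if `(u_n)`
lies in the Nehari set with `A(u_n) > 0` and `‖u_n‖ → ∞`, then
`λ(c, u_n) = (N(u_n)/η − B(u_n)/β − c)/(A(u_n)/α) → ∞`. -/
theorem stmt14 {X : Type*} [NormedAddCommGroup X] [NormedSpace ℝ X]
    (α η β C : ℝ) (h1 : 1 < α) (h2 : α < η) (h3 : η < β) (hC : 0 < C)
    (N A B : X → ℝ)
    (hNlow : ∀ u : X, C⁻¹ * ‖u‖ ^ η ≤ N u) (hNup : ∀ u : X, N u ≤ C * ‖u‖ ^ η)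
    (hA : ∀ u : X, |A u| ≤ C * ‖u‖ ^ α)
    (hB : ∀ u : X, |B u| ≤ C * ‖u‖ ^ β)
    (c : ℝ) (u : ℕ → X)
    (hApos : ∀ n : ℕ, 0 < A (u n))
    (hNeh : ∀ n : ℕ, (η - α) / η * N (u n) - (β - α) / β * B (u n) + α * c = 0)
    (hnorm : Tendsto (fun n => ‖u n‖) atTop atTop) :
    Tendsto (fun n => (N (u n) / η - B (u n) / β - c) / (A (u n) / α)) atTop atTop := by
  have hα : (0:ℝ) < α := by linarith
  have hη : (0:ℝ) < η := by linarith
  have hβ : (0:ℝ) < β := by linarith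
  have hβα : (0:ℝ) < β - α := by linarith
  set k : ℝ := (β - η) / (η * (β - α)) with hk
  set m : ℝ := c * β / (β - α) with hm
  have hkpos : 0 < k := div_pos (by linarith) (by positivity)
  have key : ∀ n, N (u n) / η - B (u n) / β - c = k * N (u n) - m := by
    intro n
    have h := hNeh n
    rw [hk, hm]
    field_simp at h ⊢
    linear_combination h
  -- auxiliary tendsto facts
  have hcomp : Tendsto (fun n => k * C⁻¹ * ‖u n‖ ^ η) atTop atTop :=
    ((tendsto_rpow_atTop hη).comp hnorm).const_mul_atTop (by positivity)
  have hq : ∀ᶠ n in atTop, m ≤ k * C⁻¹ * ‖u n‖ ^ η := hcomp.eventually_ge_atTop m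
  have hnorm1 : ∀ᶠ n in atTop, 1 ≤ ‖u n‖ := hnorm.eventually_ge_atTop 1
  have hg : Tendsto
      (fun n => α * k / (C * C) * ‖u n‖ ^ (η - α) + -(α * m / C * ‖u n‖ ^ (-α)))
      atTop atTop := by
    have h1 : Tendsto (fun n => α * k / (C * C) * ‖u n‖ ^ (η - α)) atTop atTop :=
      ((tendsto_rpow_atTop (by linarith : (0:ℝ) < η - α)).comp hnorm).const_mul_atTop
        (by positivity)
    have h2 : Tendsto (fun n => -(α * m / C * ‖u n‖ ^ (-α))) atTop (nhds (-(α * m / C * 0))) := by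
      exact (((tendsto_rpow_neg_atTop hα).comp hnorm).const_mul _).neg
    exact h1.atTop_add (by simpa using h2)
  refine tendsto_atTop_mono' atTop ?_ hg
  filter_upwards [hq, hnorm1] with n hqn hn
  have ht0 : (0:ℝ) < ‖u n‖ := by linarith
  set t : ℝ := ‖u n‖
  have htα : (0:ℝ) < t ^ α := Real.rpow_pos_of_pos ht0 α
  have geq : α * k / (C * C) * t ^ (η - α) + -(α * m / C * t ^ (-α))
      = (k * C⁻¹ * t ^ η - m) / (C * t ^ α / α) := by
    rw [Real.rpow_sub ht0, Real.rpow_neg ht0.le]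
    field_simp
    ring
  rw [geq, key n]
  have hApos' := hApos n
  have hAle : A (u n) ≤ C * t ^ α := (abs_le.mp (hA (u n))).2
  have hqnn : 0 ≤ k * C⁻¹ * t ^ η - m := by linarith
  have hnum : k * C⁻¹ * t ^ η - m ≤ k * N (u n) - m := by
    have := hNlow (u n)
    nlinarith
  exact div_le_div₀ (by linarith) hnum (div_pos hApos' hα)
    (by gcongr)
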